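/- Let p be a prime and for each i ∈ ℤ/pℤ define a permutation π_i of the alphabet (ℤ/pℤ)³ by ordering letters (x,y,z) lexicographically according to the triple (rep(i²x+iy+z), rep(2ix+y), rep(x)), where rep denotes the representative in {0,...,p−1}. Then for all i ≠ j, LCS(π_i, π_j) ≤ 4p − 2. -/

import Mathlib

/-- Lexicographic strict order on triples of naturals. -/
def LexLt (a b : ℕ × ℕ × ℕ) : Prop :=
  a.1 < b.1 ∨ (a.1 = b.1 ∧ (a.2.1 < b.2.1 ∨ (a.2.1 = b.2.1 ∧ a.2.2 < b.2.2)))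

/-- The sorting key of the letter `v = (x,y,z)` in the permutation `π_i`. -/
def key (p : ℕ) (i : ZMod p) (v : ZMod p × ZMod p × ZMod p) : ℕ × ℕ × ℕ :=
  ((i^2 * v.1 + i * v.2.1 + v.2.2).val, (2 * i * v.1 + v.2.1).val, v.1.val)

lemma lexLt_trans {a b c : ℕ × ℕ × ℕ} (h1 : LexLt a b) (h2 : LexLt b c) : LexLt a c := by
  unfold LexLt at *
  rcases h1 with h1 | ⟨e1, h1⟩ <;> rcases h2 with h2 | ⟨e2, h2⟩
  · exact Or.inl (h1.trans h2)
  · exact Or.inl (e2 ▸ h1)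
  · exact Or.inl (e1 ▸ h2)
  · refine Or.inr ⟨e1.trans e2, ?_⟩
    rcases h1 with h1 | ⟨f1, h1⟩ <;> rcases h2 with h2 | ⟨f2, h2⟩
    · exact Or.inl (h1.trans h2)
    · exact Or.inl (f2 ▸ h1)
    · exact Or.inl (f1 ▸ h2)
    · exact Or.inr ⟨f1.trans f2, h1.trans h2⟩

/-- The measure: `2*(val aᵢ + val aⱼ) + (val bᵢ + val bⱼ)/p`, which strictly increases
along any common subsequence of `π_i` and `π_j`. -/
def Mfun (p : ℕ) (i j : ZMod p) (v : ZMod p × ZMod p × ZMod p) : ℕ :=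
  2 * ((i^2 * v.1 + i * v.2.1 + v.2.2).val + (j^2 * v.1 + j * v.2.1 + v.2.2).val)
    + ((2 * i * v.1 + v.2.1).val + (2 * j * v.1 + v.2.1).val) / p

lemma psi_le (p : ℕ) (hp : 0 < p) (a b : ZMod p) : (a.val + b.val) / p ≤ 1 := by
  haveI : NeZero p := ⟨hp.ne'⟩
  have h : a.val + b.val < 2 * p := by
    have := a.val_lt; have := b.val_lt; omega
  have := (Nat.div_lt_iff_lt_mul hp).mpr (by omega : a.val + b.val < 2 * p)
  omega

lemma step (p : ℕ) (hp : p.Prime) (i j : ZMod p) (hij : i ≠ j)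
    (u v : ZMod p × ZMod p × ZMod p)
    (h1 : LexLt (key p i u) (key p i v)) (h2 : LexLt (key p j u) (key p j v)) :
    Mfun p i j u < Mfun p i j v := by
  haveI : Fact p.Prime := ⟨hp⟩
  haveI : NeZero p := ⟨hp.ne_zero⟩
  obtain ⟨x, y, z⟩ := u
  obtain ⟨x', y', z'⟩ := v
  simp only [LexLt, key, Mfun] at h1 h2 ⊢
  have hale_i : (i^2 * x + i * y + z).val ≤ (i^2 * x' + i * y' + z').val := by
    rcases h1 with h | ⟨e, _⟩
    · exact le_of_lt h
    · exact le_of_eq e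
  have hale_j : (j^2 * x + j * y + z).val ≤ (j^2 * x' + j * y' + z').val := by
    rcases h2 with h | ⟨e, _⟩
    · exact le_of_lt h
    · exact le_of_eq e
  have hpsi_u := psi_le p hp.pos (2 * i * x + y) (2 * j * x + y)
  have hpsi_v := psi_le p hp.pos (2 * i * x' + y') (2 * j * x' + y')
  by_cases hphi : (i^2 * x + i * y + z).val + (j^2 * x + j * y + z).val
      < (i^2 * x' + i * y' + z').val + (j^2 * x' + j * y' + z').val
  · generalize hg1 : ((2 * i * x + y).val + (2 * j * x + y).val) / p = E at hpsi_u ⊢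
    generalize hg2 : ((2 * i * x' + y').val + (2 * j * x' + y').val) / p = F at hpsi_v ⊢
    omega
  · have heq_i : (i^2 * x + i * y + z).val = (i^2 * x' + i * y' + z').val := by omega
    have heq_j : (j^2 * x + j * y + z).val = (j^2 * x' + j * y' + z').val := by omega
    have hai : i^2 * x + i * y + z = i^2 * x' + i * y' + z' := ZMod.val_injective p heq_i
    have haj : j^2 * x + j * y + z = j^2 * x' + j * y' + z' := ZMod.val_injective p heq_j
    have hijne : i - j ≠ 0 := sub_ne_zero.mpr hij
    have hc : (i + j) * x + y = (i + j) * x' + y' := by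
      have h : (i - j) * ((i + j) * x + y) = (i - j) * ((i + j) * x' + y') := by
        linear_combination hai - haj
      exact mul_left_cancel₀ hijne h
    have hbi : (2 * i * x + y).val < (2 * i * x' + y').val := by
      rcases h1 with h | ⟨_, h | ⟨e, hx⟩⟩
      · omega
      · exact h
      · exfalso
        have hb : 2 * i * x + y = 2 * i * x' + y' := ZMod.val_injective p e
        have hxeq : x = x' := by
          have h' : (i - j) * x = (i - j) * x' := by linear_combination hb - hc
          exact mul_left_cancel₀ hijne h'
        rw [hxeq] at hx
        exact lt_irrefl _ hx
    have hbj : (2 * j * x + y).val < (2 * j * x' + y').val := by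
      rcases h2 with h | ⟨_, h | ⟨e, hx⟩⟩
      · omega
      · exact h
      · exfalso
        have hb : 2 * j * x + y = 2 * j * x' + y' := ZMod.val_injective p e
        have hxeq : x = x' := by
          have h' : (j - i) * x = (j - i) * x' := by linear_combination hb - hc
          exact mul_left_cancel₀ (sub_ne_zero.mpr hij.symm) h'
        rw [hxeq] at hx
        exact lt_irrefl _ hx
    have hsum : (2 * i * x + y) + (2 * j * x + y) = (2 * i * x' + y') + (2 * j * x' + y') := by
      linear_combination 2 * hc
    have hmod : ((2 * i * x + y).val + (2 * j * x + y).val) % p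
        = ((2 * i * x' + y').val + (2 * j * x' + y').val) % p := by
      rw [← ZMod.val_add, ← ZMod.val_add, hsum]
    have hdiv : ((2 * i * x + y).val + (2 * j * x + y).val) / p
        < ((2 * i * x' + y').val + (2 * j * x' + y').val) / p := by
      have hppos := hp.pos
      have d1 := Nat.div_add_mod ((2 * i * x + y).val + (2 * j * x + y).val) p
      have d2 := Nat.div_add_mod ((2 * i * x' + y').val + (2 * j * x' + y').val) p
      by_contra hcon
      push_neg at hcon
      nlinarith [Nat.mul_le_mul_left p hcon]
    generalize hg1 : ((2 * i * x + y).val + (2 * j * x + y).val) / p = E at hdiv ⊢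
    generalize hg2 : ((2 * i * x' + y').val + (2 * j * x' + y').val) / p = F at hdiv ⊢
    omega

theorem stmt10 (p : ℕ) (hp : p.Prime) (i j : ZMod p) (hij : i ≠ j)
    (πi πj : List (ZMod p × ZMod p × ZMod p))
    (hi_perm : πi.Nodup ∧ ∀ v, v ∈ πi)
    (hj_perm : πj.Nodup ∧ ∀ v, v ∈ πj)
    (hi_sorted : πi.Chain' fun a b => LexLt (key p i a) (key p i b))
    (hj_sorted : πj.Chain' fun a b => LexLt (key p j a) (key p j b)) :
    ∀ w : List (ZMod p × ZMod p × ZMod p),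
      w.Sublist πi → w.Sublist πj → w.length ≤ 4 * p - 2 := by
  intro w hwi hwj
  haveI : Fact p.Prime := ⟨hp⟩
  haveI : NeZero p := ⟨hp.ne_zero⟩
  haveI insti : IsTrans _ (fun a b => LexLt (key p i a) (key p i b)) :=
    ⟨fun _ _ _ h1 h2 => lexLt_trans h1 h2⟩
  haveI instj : IsTrans _ (fun a b => LexLt (key p j a) (key p j b)) :=
    ⟨fun _ _ _ h1 h2 => lexLt_trans h1 h2⟩
  have hwci : w.Chain' fun a b => LexLt (key p i a) (key p i b) := hi_sorted.sublist hwi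
  have hwcj : w.Chain' fun a b => LexLt (key p j a) (key p j b) := hj_sorted.sublist hwj
  have hM : (w.map (Mfun p i j)).Chain' (· < ·) := by
    unfold List.Chain' at hwci hwcj ⊢
    rw [List.isChain_iff_getElem] at hwci hwcj ⊢
    intro k hk
    simp only [List.length_map] at hk
    rw [List.getElem_map, List.getElem_map]
    exact step p hp i j hij _ _ (hwci k (by simpa using hk)) (hwcj k (by simpa using hk))
  have hbound : ∀ x ∈ w.map (Mfun p i j), x < 4 * p - 2 := by
    intro x hx
    rw [List.mem_map] at hx
    obtain ⟨v, _, rfl⟩ := hx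
    unfold Mfun
    have h1 := (i^2 * v.1 + i * v.2.1 + v.2.2).val_lt
    have h2 := (j^2 * v.1 + j * v.2.1 + v.2.2).val_lt
    have hdle := psi_le p hp.pos (2 * i * v.1 + v.2.1) (2 * j * v.1 + v.2.1)
    have hp2 := hp.two_le
    generalize hg : ((2 * i * v.1 + v.2.1).val + (2 * j * v.1 + v.2.1).val) / p = E at hdle ⊢
    omega
  have keylem : ∀ (l : List ℕ) (N : ℕ), l.Chain' (· < ·) → (∀ x ∈ l, x < N) → l.length ≤ N := by
    intro l N hc hb
    have hpw : l.Pairwise (· < ·) := List.isChain_iff_pairwise.mp hc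
    have hnd : l.Nodup := hpw.imp ne_of_lt
    have hsub : l.toFinset ⊆ Finset.range N := by
      intro x hx
      rw [List.mem_toFinset] at hx
      exact Finset.mem_range.mpr (hb x hx)
    calc l.length = l.toFinset.card := (List.toFinset_card_of_nodup hnd).symm
      _ ≤ (Finset.range N).card := Finset.card_le_card hsub
      _ = N := Finset.card_range N
  have := keylem (w.map (Mfun p i j)) (4 * p - 2) hM hbound
  simpa using this
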